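/- If q > p are primes and f > e are positive integers, then σ(p^f q^e)/(p^f q^e) > σ(p^e q^f)/(p^e q^f). -/

import Mathlib

open Finset

lemma term_lt (x y : ℝ) (hy : 0 < y) (hxy : y < x) {i j : ℕ} (hji : j < i) :
    x ^ j * y ^ i < x ^ i * y ^ j := by
  have hx : 0 < x := hy.trans hxy
  have h1 : y ^ (i - j) < x ^ (i - j) :=
    pow_lt_pow_left₀ hxy hy.le (by omega)
  have hi : i = j + (i - j) := by omega
  rw [hi, pow_add, pow_add]
  have := mul_lt_mul_of_pos_left h1 (mul_pos (pow_pos hx j) (pow_pos hy j))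
  nlinarith

lemma key (x y : ℝ) (hy : 0 < y) (hxy : y < x) (e f : ℕ) (hef : e < f) :
    (∑ i ∈ range (e + 1), x ^ i) * (∑ j ∈ range (f + 1), y ^ j) <
      (∑ i ∈ range (f + 1), x ^ i) * (∑ j ∈ range (e + 1), y ^ j) := by
  have hsplitx : (∑ i ∈ range (f + 1), x ^ i)
      = (∑ i ∈ range (e + 1), x ^ i) + ∑ i ∈ Ico (e + 1) (f + 1), x ^ i := by
    rw [range_eq_Ico, range_eq_Ico]; exact (Finset.sum_Ico_consecutive (fun i => x ^ i) (m := 0) (n := e + 1) (k := f + 1) (by omega) (by omega)).symm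
  have hsplity : (∑ i ∈ range (f + 1), y ^ i)
      = (∑ i ∈ range (e + 1), y ^ i) + ∑ i ∈ Ico (e + 1) (f + 1), y ^ i := by
    rw [range_eq_Ico, range_eq_Ico]; exact (Finset.sum_Ico_consecutive (fun i => y ^ i) (m := 0) (n := e + 1) (k := f + 1) (by omega) (by omega)).symm
  rw [hsplitx, hsplity]
  have hkey : (∑ j ∈ range (e + 1), x ^ j) * (∑ i ∈ Ico (e + 1) (f + 1), y ^ i)
      < (∑ i ∈ Ico (e + 1) (f + 1), x ^ i) * (∑ j ∈ range (e + 1), y ^ j) := by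
    rw [Finset.sum_mul_sum, Finset.sum_mul_sum, Finset.sum_comm]
    apply Finset.sum_lt_sum_of_nonempty
    · exact ⟨e + 1, by simp; omega⟩
    · intro i hi
      apply Finset.sum_lt_sum_of_nonempty
      · exact ⟨0, by simp⟩
      · intro j hj
        simp only [Finset.mem_Ico, Finset.mem_range] at hi hj
        exact term_lt x y hy hxy (by omega)
  nlinarith

lemma geo (c : ℝ) (hc : 0 < c) (k : ℕ) :
    (∑ i ∈ range (k + 1), c ^ i) = c ^ k * ∑ i ∈ range (k + 1), (c⁻¹) ^ i := by
  rw [Finset.mul_sum, ← Finset.sum_range_reflect]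
  apply Finset.sum_congr rfl
  intro i hi
  simp only [Finset.mem_range] at hi
  have : k + 1 - 1 - i = k - i := by omega
  rw [this]
  rw [inv_pow, eq_comm, mul_inv_eq_iff_eq_mul₀ (by positivity), ← pow_add]
  congr 1
  omega

theorem sigma_ratio_swap (p q e f : ℕ) (hp : p.Prime) (hq : q.Prime) (hpq : p < q)
    (he : 0 < e) (hef : e < f) :
    ((∑ d ∈ (p ^ e * q ^ f).divisors, d : ℕ) : ℝ) / ((p : ℝ) ^ e * (q : ℝ) ^ f) <
      ((∑ d ∈ (p ^ f * q ^ e).divisors, d : ℕ) : ℝ) / ((p : ℝ) ^ f * (q : ℝ) ^ e) := by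
  have hco : p.Coprime q := (Nat.coprime_primes hp hq).mpr hpq.ne
  have hc1 : (p ^ e).Coprime (q ^ f) := Nat.Coprime.pow _ _ hco
  have hc2 : (p ^ f).Coprime (q ^ e) := Nat.Coprime.pow _ _ hco
  rw [hc1.sum_divisors_mul, hc2.sum_divisors_mul,
    Nat.sum_divisors_prime_pow hp, Nat.sum_divisors_prime_pow hp,
    Nat.sum_divisors_prime_pow hq, Nat.sum_divisors_prime_pow hq]
  push_cast
  have hp0 : (0:ℝ) < (p:ℝ) := by exact_mod_cast hp.pos
  have hq0 : (0:ℝ) < (q:ℝ) := by exact_mod_cast hq.pos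
  rw [geo (p:ℝ) hp0 e, geo (p:ℝ) hp0 f, geo (q:ℝ) hq0 e, geo (q:ℝ) hq0 f]
  have hpe : (0:ℝ) < (p:ℝ) ^ e := pow_pos hp0 e
  have hpf : (0:ℝ) < (p:ℝ) ^ f := pow_pos hp0 f
  have hqe : (0:ℝ) < (q:ℝ) ^ e := pow_pos hq0 e
  have hqf : (0:ℝ) < (q:ℝ) ^ f := pow_pos hq0 f
  have h1 : ((p:ℝ) ^ e * ∑ i ∈ range (e + 1), ((p:ℝ)⁻¹) ^ i) *
      ((q:ℝ) ^ f * ∑ i ∈ range (f + 1), ((q:ℝ)⁻¹) ^ i) / ((p : ℝ) ^ e * (q : ℝ) ^ f)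
      = (∑ i ∈ range (e + 1), ((p:ℝ)⁻¹) ^ i) * (∑ i ∈ range (f + 1), ((q:ℝ)⁻¹) ^ i) := by
    field_simp
  have h2 : ((p:ℝ) ^ f * ∑ i ∈ range (f + 1), ((p:ℝ)⁻¹) ^ i) *
      ((q:ℝ) ^ e * ∑ i ∈ range (e + 1), ((q:ℝ)⁻¹) ^ i) / ((p : ℝ) ^ f * (q : ℝ) ^ e)
      = (∑ i ∈ range (f + 1), ((p:ℝ)⁻¹) ^ i) * (∑ i ∈ range (e + 1), ((q:ℝ)⁻¹) ^ i) := by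
    field_simp
  rw [h1, h2]
  apply key
  · positivity
  · apply inv_strictAnti₀ hp0
    exact_mod_cast hpq
  · exact hef
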